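/- arXiv:math/0608609 — 4 statements merged into one kernel-verified Lean document; each statement's English description precedes it below -/
import Mathlib

section
/- A separated bornological algebra A is locally multiplicative if and only if ρ(S) < ∞ for every small subset S ⊂ A, and A is analytically nilpotent if and only if ρ(S) = 0 for every small subset S ⊂ A. -/
/-!
STATEMENT 2: A separated bornological algebra `A` is locally multiplicative iff
`ρ(S) < ∞` for all small `S ⊆ A`, and analytically nilpotent iff `ρ(S) = 0`
for all small `S ⊆ A`.
-/

open Bornology Set
open scoped ENNReal Pointwise

/-- `setPow S n` is the set of `(n+1)`-fold products of elements of `S`. -/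
def setPow {A : Type} [Mul A] (S : Set A) : ℕ → Set A
  | 0 => S
  | n + 1 => setPow S n * S

/-- The multiplicative closure `S^∞ = ⋃_{n ≥ 1} S^n`. -/
def mulClosure {A : Type} [Mul A] (S : Set A) : Set A := ⋃ n, setPow S n

/-- The spectral radius `ρ(S; A)`. -/
noncomputable def specRad (A : Type) [Mul A] [SMul ℝ A] [Bornology A] (S : Set A) : ℝ≥0∞ :=
  sInf {r : ℝ≥0∞ | ∃ t : ℝ, 0 < t ∧ r = ENNReal.ofReal t ∧
    Bornology.IsBounded (mulClosure (t⁻¹ • S))}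

/-- A bornological vector space is separated if the only bounded linear subspace is `0`. -/
def SeparatedBorn (A : Type) [AddCommGroup A] [Module ℝ A] [Bornology A] : Prop :=
  ∀ W : Submodule ℝ A, Bornology.IsBounded (W : Set A) → W = ⊥

/-- A disk: an absolutely convex (balanced and convex) subset. -/
def IsDisk {A : Type} [AddCommGroup A] [Module ℝ A] (S : Set A) : Prop :=
  Balanced ℝ S ∧ Convex ℝ S

/-- A separated bornological algebra is locally multiplicative if every small subset is
absorbed by a small multiplicatively closed disk. -/
def LocallyMultiplicative (A : Type) [NonUnitalRing A] [Module ℝ A] [Bornology A] : Prop :=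
  ∀ S : Set A, IsBounded S → ∃ (l : ℝ) (T : Set A),
    0 < l ∧ IsBounded T ∧ IsDisk T ∧ T * T ⊆ T ∧ S ⊆ l • T

/-- A separated bornological algebra is analytically nilpotent if `S^∞` is small for
every small `S`. -/
def AnalyticallyNilpotent (A : Type) [NonUnitalRing A] [Module ℝ A] [Bornology A] : Prop :=
  ∀ S : Set A, IsBounded S → IsBounded (mulClosure S)

section MyAux

set_option linter.unusedSectionVars false

variable {A : Type} [NonUnitalRing A] [Module ℝ A] [Bornology A]

/-- Balanced hulls of bounded sets are bounded. -/
lemma myBddBalHull (hhull : ∀ S : Set A, IsBounded S → IsBounded (convexHull ℝ (balancedHull ℝ S)))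
    {S : Set A} (hS : IsBounded S) : IsBounded (balancedHull ℝ S) :=
  (hhull S hS).subset (subset_convexHull ℝ _)

/-- Sums of bounded sets are bounded. -/
lemma myBddAdd (hsm : ∀ (r : ℝ) (S : Set A), IsBounded S → IsBounded (r • S))
    (hhull : ∀ S : Set A, IsBounded S → IsBounded (convexHull ℝ (balancedHull ℝ S)))
    {S T : Set A} (hS : IsBounded S) (hT : IsBounded T) : IsBounded (S + T) := by
  have h2 : IsBounded ((2:ℝ) • convexHull ℝ (balancedHull ℝ (S ∪ T))) :=
    hsm _ _ (hhull _ (hS.union hT))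
  refine h2.subset ?_
  rintro x ⟨a, ha, b, hb, rfl⟩
  have hah : a ∈ convexHull ℝ (balancedHull ℝ (S ∪ T)) :=
    subset_convexHull ℝ _ (subset_balancedHull (𝕜 := ℝ) (Or.inl ha))
  have hbh : b ∈ convexHull ℝ (balancedHull ℝ (S ∪ T)) :=
    subset_convexHull ℝ _ (subset_balancedHull (𝕜 := ℝ) (Or.inr hb))
  have hmid : (2:ℝ)⁻¹ • a + (2:ℝ)⁻¹ • b ∈ convexHull ℝ (balancedHull ℝ (S ∪ T)) :=
    (convex_convexHull ℝ _) hah hbh (by norm_num) (by norm_num) (by norm_num)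
  refine ⟨_, hmid, ?_⟩
  show (2:ℝ) • ((2:ℝ)⁻¹ • a + (2:ℝ)⁻¹ • b) = a + b
  rw [smul_add, smul_smul, smul_smul]
  norm_num

/-- The "defect of ℝ-linearity" of an additive bounded map has bounded range. -/
lemma myRangeBdd (hsm : ∀ (r : ℝ) (S : Set A), IsBounded S → IsBounded (r • S))
    (hhull : ∀ S : Set A, IsBounded S → IsBounded (convexHull ℝ (balancedHull ℝ S)))
    (f : A →+ A) (hf : ∀ S : Set A, IsBounded S → IsBounded (f '' S)) (v : A) :
    IsBounded (Set.range fun s : ℝ => f (s • v) - s • f v) := by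
  set g : ℝ →+ A := AddMonoidHom.mk' (fun s => f (s • v) - s • f v) (by
    intro a b
    simp only [add_smul, map_add, smul_sub]
    abel) with hg
  have hgint : ∀ n : ℤ, g (n : ℝ) = 0 := by
    intro n
    have h1 : g 1 = 0 := by simp [hg]
    have : ((n : ℝ)) = n • (1 : ℝ) := by simp
    rw [this, map_zsmul, h1, smul_zero]
  have hfract : ∀ s : ℝ, g s = g (Int.fract s) := by
    intro s
    conv_lhs => rw [← Int.fract_add_floor s]
    rw [map_add, hgint, add_zero]
  have hB : IsBounded ((f '' balancedHull ℝ {v}) + balancedHull ℝ {f v}) :=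
    myBddAdd hsm hhull (hf _ (myBddBalHull hhull isBounded_singleton))
      (myBddBalHull hhull isBounded_singleton)
  refine hB.subset ?_
  rintro x ⟨s, rfl⟩
  show g s ∈ _
  rw [hfract s]
  have h01 : ‖Int.fract s‖ ≤ 1 := by
    rw [Real.norm_eq_abs, abs_of_nonneg (Int.fract_nonneg s)]
    exact (Int.fract_lt_one s).le
  refine ⟨f (Int.fract s • v), ⟨Int.fract s • v, ?_, rfl⟩, -(Int.fract s • f v), ?_, ?_⟩
  · exact mem_balancedHull_iff.2 ⟨Int.fract s, h01, ⟨v, rfl, rfl⟩⟩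
  · rw [← neg_smul]
    exact mem_balancedHull_iff.2 ⟨-(Int.fract s), by rwa [norm_neg], ⟨f v, rfl, rfl⟩⟩
  · show _ = f (Int.fract s • v) - Int.fract s • f v
    abel

/-- Key: additive maps preserving boundedness are automatically `ℝ`-linear,
by separatedness of the bornology. -/
lemma myAddHomSmul (hsep : SeparatedBorn A)
    (hsm : ∀ (r : ℝ) (S : Set A), IsBounded S → IsBounded (r • S))
    (hhull : ∀ S : Set A, IsBounded S → IsBounded (convexHull ℝ (balancedHull ℝ S)))
    (f : A →+ A) (hf : ∀ S : Set A, IsBounded S → IsBounded (f '' S)) (r : ℝ) (v : A) :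
    f (r • v) = r • f v := by
  have key : ∀ w : A, IsBounded (Set.range fun s : ℝ => f (s • w) - s • f w) :=
    myRangeBdd hsm hhull f hf
  set d : A := f (r • v) - r • f v with hd
  have hW : IsBounded ((Submodule.span ℝ {d} : Submodule ℝ A) : Set A) := by
    have hBdd : IsBounded ((Set.range fun s : ℝ => f (s • v) - s • f v) +
        (Set.range fun s : ℝ => f (s • (r • v)) - s • f (r • v))) :=
      myBddAdd hsm hhull (key v) (key (r • v))
    refine hBdd.subset ?_
    intro z hz
    obtain ⟨s, hs⟩ := Submodule.mem_span_singleton.1 hz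
    refine ⟨f ((s * r) • v) - (s * r) • f v, ⟨s * r, rfl⟩,
      f ((-s) • (r • v)) - (-s) • f (r • v), ⟨-s, rfl⟩, ?_⟩
    have e1 : (s * r) • v = s • (r • v) := mul_smul s r v
    have e2 : f ((-s) • (r • v)) = - f (s • (r • v)) := by rw [neg_smul, map_neg]
    have e3 : (-s) • f (r • v) = - (s • f (r • v)) := neg_smul s _
    rw [← hs, hd, e1, e2, e3, smul_sub]
    simp only [mul_smul]
    abel
  have hbot := hsep _ hW
  have hd0 : d = 0 := by
    have hmem : d ∈ Submodule.span ℝ ({d} : Set A) := Submodule.mem_span_singleton_self d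
    rw [hbot] at hmem
    simpa using hmem
  exact sub_eq_zero.1 hd0

lemma mySetPowMono {S T : Set A} (h : S ⊆ T) : ∀ n, setPow S n ⊆ setPow T n
  | 0 => h
  | n + 1 => Set.mul_subset_mul (mySetPowMono h n) h

lemma mySetPowSubset {T : Set A} (hT : T * T ⊆ T) : ∀ n, setPow T n ⊆ T
  | 0 => subset_rfl
  | n + 1 => (Set.mul_subset_mul (mySetPowSubset hT n) subset_rfl).trans hT

lemma mySetPowMul (S : Set A) : ∀ m n : ℕ, setPow S m * setPow S n ⊆ setPow S (m + n + 1)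
  | m, 0 => subset_rfl
  | m, n + 1 => by
    show setPow S m * (setPow S n * S) ⊆ _
    rw [← mul_assoc]
    exact (Set.mul_subset_mul (mySetPowMul S m n) subset_rfl)

lemma myMulClosureMul (S : Set A) : mulClosure S * mulClosure S ⊆ mulClosure S := by
  rintro _ ⟨a, ha, b, hb, rfl⟩
  obtain ⟨_, ⟨m, rfl⟩, ha⟩ := ha
  obtain ⟨_, ⟨n, rfl⟩, hb⟩ := hb
  exact Set.mem_iUnion.2 ⟨m + n + 1, mySetPowMul S m n ⟨a, ha, b, hb, rfl⟩⟩

lemma myBalHullMul (hc1 : ∀ (r : ℝ) (x y : A), (r • x) * y = r • (x * y))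
    (hc2 : ∀ (r : ℝ) (x y : A), x * (r • y) = r • (x * y))
    {B : Set A} (hB : B * B ⊆ B) :
    balancedHull ℝ B * balancedHull ℝ B ⊆ balancedHull ℝ B := by
  rintro _ ⟨a, ha, b, hb, rfl⟩
  obtain ⟨r, hr, a', ha', rfl⟩ := mem_balancedHull_iff.1 ha
  obtain ⟨u, hu, b', hb', rfl⟩ := mem_balancedHull_iff.1 hb
  refine mem_balancedHull_iff.2 ⟨r * u, ?_, a' * b', hB ⟨a', ha', b', hb', rfl⟩, ?_⟩
  · calc ‖r * u‖ = ‖r‖ * ‖u‖ := norm_mul r u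
      _ ≤ 1 := mul_le_one₀ hr (norm_nonneg u) hu
  · show (r * u) • (a' * b') = (r • a') * (u • b')
    rw [hc1, hc2, smul_smul]

lemma myConvHullMul (hc1 : ∀ (r : ℝ) (x y : A), (r • x) * y = r • (x * y))
    (hc2 : ∀ (r : ℝ) (x y : A), x * (r • y) = r • (x * y))
    {D : Set A} (hD : D * D ⊆ D) :
    convexHull ℝ D * convexHull ℝ D ⊆ convexHull ℝ D := by
  rintro _ ⟨a, ha, b, hb, rfl⟩
  have step1 : ∀ d ∈ D, d * b ∈ convexHull ℝ D := by
    intro d hd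
    have hconv : Convex ℝ {y : A | d * y ∈ convexHull ℝ D} := by
      intro y₁ h₁ y₂ h₂ p q hp hq hpq
      simp only [mem_setOf_eq] at h₁ h₂ ⊢
      rw [mul_add, hc2, hc2]
      exact (convex_convexHull ℝ D) h₁ h₂ hp hq hpq
    have hsub : D ⊆ {y : A | d * y ∈ convexHull ℝ D} := fun y hy =>
      subset_convexHull ℝ D (hD ⟨d, hd, y, hy, rfl⟩)
    exact convexHull_min hsub hconv hb
  have hconv : Convex ℝ {x : A | x * b ∈ convexHull ℝ D} := by
    intro x₁ h₁ x₂ h₂ p q hp hq hpq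
    simp only [mem_setOf_eq] at h₁ h₂ ⊢
    rw [add_mul, hc1, hc1]
    exact (convex_convexHull ℝ D) h₁ h₂ hp hq hpq
  exact convexHull_min step1 hconv ha

/-- Extracting a witness from a strict bound on the spectral radius. -/
lemma mySpecExists {S : Set A} {b : ℝ≥0∞} (h : specRad A S < b) :
    ∃ t : ℝ, 0 < t ∧ ENNReal.ofReal t < b ∧ IsBounded (mulClosure (t⁻¹ • S)) := by
  unfold specRad at h
  rw [sInf_lt_iff] at h
  obtain ⟨r, ⟨t, ht, rfl, hbd⟩, hrb⟩ := h
  exact ⟨t, ht, hrb, hbd⟩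

end MyAux

theorem stmt2 {A : Type} [NonUnitalRing A] [Module ℝ A] [Bornology A]
    (hsep : SeparatedBorn A)
    (hmul : ∀ S T : Set A, IsBounded S → IsBounded T → IsBounded (S * T))
    (hsm : ∀ (r : ℝ) (S : Set A), IsBounded S → IsBounded (r • S))
    (hhull : ∀ S : Set A, IsBounded S → IsBounded (convexHull ℝ (balancedHull ℝ S))) :
    (LocallyMultiplicative A ↔ ∀ S : Set A, IsBounded S → specRad A S < ⊤) ∧
    (AnalyticallyNilpotent A ↔ ∀ S : Set A, IsBounded S → specRad A S = 0) := by
  -- Step 1: multiplication is automatically ℝ-bilinear (by separatedness).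
  have hc1 : ∀ (r : ℝ) (x y : A), (r • x) * y = r • (x * y) := by
    intro r x y
    have := myAddHomSmul hsep hsm hhull (AddMonoidHom.mulRight y)
      (fun S hS => (hmul S {y} hS isBounded_singleton).subset
        (by rintro _ ⟨a, ha, rfl⟩; exact ⟨a, ha, y, rfl, rfl⟩)) r x
    simpa using this
  have hc2 : ∀ (r : ℝ) (x y : A), x * (r • y) = r • (x * y) := by
    intro r x y
    have := myAddHomSmul hsep hsm hhull (AddMonoidHom.mulLeft x)
      (fun S hS => (hmul {x} S isBounded_singleton hS).subset
        (by rintro _ ⟨a, ha, rfl⟩; exact ⟨x, rfl, a, ha, rfl⟩)) r y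
    simpa using this
  constructor
  · -- Locally multiplicative ↔ finite spectral radii
    constructor
    · intro hLM S hS
      obtain ⟨l, T, hl, hTb, _hTd, hTm, hST⟩ := hLM S hS
      have h1 : l⁻¹ • S ⊆ T := by
        rintro _ ⟨s, hs, rfl⟩
        obtain ⟨tt, htt, rfl⟩ := hST hs
        show l⁻¹ • (l • tt) ∈ T
        rwa [inv_smul_smul₀ hl.ne']
      have hsub : mulClosure (l⁻¹ • S) ⊆ T := by
        rintro z hz
        obtain ⟨_, ⟨n, rfl⟩, hz⟩ := hz
        exact mySetPowSubset hTm n (mySetPowMono h1 n hz)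
      calc specRad A S ≤ ENNReal.ofReal l := sInf_le ⟨l, hl, rfl, hTb.subset hsub⟩
        _ < ⊤ := ENNReal.ofReal_lt_top
    · intro h S hS
      obtain ⟨t, ht, _, hb⟩ := mySpecExists (h S hS)
      refine ⟨t, convexHull ℝ (balancedHull ℝ (mulClosure (t⁻¹ • S))), ht, hhull _ hb,
        ⟨Balanced.convexHull (balancedHull.balanced _), convex_convexHull ℝ _⟩,
        myConvHullMul hc1 hc2 (myBalHullMul hc1 hc2 (myMulClosureMul _)), ?_⟩
      intro s hs
      exact ⟨t⁻¹ • s, subset_convexHull ℝ _ (subset_balancedHull (𝕜 := ℝ)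
        (Set.mem_iUnion.2 ⟨0, ⟨s, hs, rfl⟩⟩)), smul_inv_smul₀ ht.ne' s⟩
  · -- Analytically nilpotent ↔ vanishing spectral radii
    constructor
    · intro hAN S hS
      refine le_antisymm (ENNReal.le_of_forall_pos_le_add fun ε hε _ => ?_) zero_le
      rw [zero_add]
      have hb : IsBounded (mulClosure (((ε : ℝ))⁻¹ • S)) := hAN _ (hsm _ _ hS)
      calc specRad A S ≤ ENNReal.ofReal (ε : ℝ) :=
            sInf_le ⟨(ε : ℝ), by exact_mod_cast hε, rfl, hb⟩
        _ = (ε : ℝ≥0∞) := ENNReal.ofReal_coe_nnreal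
    · intro h S hS
      have hlt : specRad A S < 1 := by rw [h S hS]; exact zero_lt_one
      obtain ⟨t, ht, hr1, hb⟩ := mySpecExists hlt
      have ht1 : t ≤ 1 := by
        have := ENNReal.ofReal_lt_one.1 hr1
        linarith
      set U : Set A := t⁻¹ • S with hU
      have hSU : S = t • U := by
        rw [hU]
        ext z
        constructor
        · intro hz
          exact ⟨t⁻¹ • z, ⟨z, hz, rfl⟩, smul_inv_smul₀ ht.ne' z⟩
        · rintro ⟨_, ⟨w, hw, rfl⟩, rfl⟩
          show t • (t⁻¹ • w) ∈ S
          rwa [smul_inv_smul₀ ht.ne']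
      have hpow : ∀ n, ∀ x ∈ setPow (t • U) n, ∃ u ∈ setPow U n, x = t ^ (n + 1) • u := by
        intro n
        induction n with
        | zero =>
          rintro _ ⟨u, hu, rfl⟩
          exact ⟨u, hu, by rw [pow_one]⟩
        | succ n ih =>
          rintro _ ⟨a, ha, _, ⟨u', hu', rfl⟩, rfl⟩
          obtain ⟨u, hu, rfl⟩ := ih a ha
          refine ⟨u * u', ⟨u, hu, u', hu', rfl⟩, ?_⟩
          show (t ^ (n + 1) • u) * (t • u') = t ^ (n + 1 + 1) • (u * u')
          rw [hc1, hc2, smul_smul, ← pow_succ]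
      have hsub : mulClosure S ⊆ balancedHull ℝ (mulClosure U) := by
        rw [hSU]
        rintro z hz
        obtain ⟨_, ⟨n, rfl⟩, hz⟩ := hz
        obtain ⟨u, hu, rfl⟩ := hpow n z hz
        refine mem_balancedHull_iff.2 ⟨t ^ (n + 1), ?_, u, Set.mem_iUnion.2 ⟨n, hu⟩, rfl⟩
        rw [Real.norm_eq_abs, abs_of_pos (pow_pos ht _)]
        exact pow_le_one₀ ht.le ht1
      exact (myBddBalHull hhull hb).subset hsub
end

section
/- A separated (complete) bornological algebra is locally multiplicative if and only if it is a direct limit of (complete) normed algebras. -/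
/-!
STATEMENT 4: A separated bornological algebra is locally multiplicative if and only if
it is a direct limit of normed algebras (realized as an increasing union of
subalgebras carrying submultiplicative norms, inducing the bornology).
-/

open Bornology Set
open scoped ENNReal Pointwise

/-- `A` is a direct limit of normed algebras: there is a directed family of
subalgebras `Sa i`, each equipped with a (submultiplicative, homogeneous) norm `ν i`,
whose union is `A`, such that the inclusions are bounded and the bornology of `A` is
exactly the inductive limit bornology (a set is small iff it is a norm-bounded subset
of some `Sa i`). -/
def IsDirectLimitOfNormedAlgebras (A : Type) [NonUnitalRing A] [Module ℝ A]
    [IsScalarTower ℝ A A] [SMulCommClass ℝ A A] [Bornology A] : Prop :=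
  ∃ (ι : Type) (le : ι → ι → Prop), Nonempty ι ∧
    (∀ i, le i i) ∧ (∀ i j k, le i j → le j k → le i k) ∧
    (∀ i j, ∃ k, le i k ∧ le j k) ∧
    ∃ (Sa : ι → NonUnitalSubalgebra ℝ A) (ν : ι → A → ℝ),
      -- directed increasing family of subalgebras covering A
      (∀ i j, le i j → Sa i ≤ Sa j) ∧
      (∀ x : A, ∃ i, x ∈ Sa i) ∧
      -- each ν i is a norm on Sa i
      (∀ i, ∀ x ∈ Sa i, 0 ≤ ν i x) ∧
      (∀ i, ∀ x ∈ Sa i, (ν i x = 0 ↔ x = 0)) ∧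
      (∀ i, ∀ x ∈ Sa i, ∀ y ∈ Sa i, ν i (x + y) ≤ ν i x + ν i y) ∧
      (∀ i, ∀ (r : ℝ), ∀ x ∈ Sa i, ν i (r • x) = |r| * ν i x) ∧
      -- submultiplicativity: each piece is a normed algebra
      (∀ i, ∀ x ∈ Sa i, ∀ y ∈ Sa i, ν i (x * y) ≤ ν i x * ν i y) ∧
      -- the structure maps (inclusions) are bounded
      (∀ i j, le i j → ∃ C : ℝ, 0 < C ∧ ∀ x ∈ Sa i, ν j x ≤ C * ν i x) ∧
      -- the bornology of A is the direct limit bornology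
      (∀ U : Set A, IsBounded U ↔ ∃ (i : ι) (C : ℝ),
        U ⊆ {x | x ∈ Sa i ∧ ν i x ≤ C})

set_option linter.unusedSectionVars false
set_option linter.unusedVariables false
set_option maxHeartbeats 1000000

set_option linter.unusedSectionVars false
set_option linter.unusedVariables false

section Aux
variable {A : Type} [NonUnitalRing A] [Module ℝ A]
  [IsScalarTower ℝ A A] [SMulCommClass ℝ A A]

/-- helper: `≤` from approximations -/
lemma aux_le_of_pos {z w : ℝ} (h : ∀ ε : ℝ, 0 < ε → z ≤ w + ε) : z ≤ w := by
  by_contra hc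
  push_neg at hc
  have := h ((z - w) / 2) (by linarith)
  linarith

/-- helper: limit lemma -/
lemma aux_le_mul {z c g : ℝ} (hc : 0 ≤ c) (h : ∀ s, g < s → z ≤ c * s) : z ≤ c * g := by
  apply aux_le_of_pos
  intro ε hε
  rcases eq_or_lt_of_le hc with rfl | hc'
  · have := h (g + 1) (by linarith)
    nlinarith
  · have h2 := h (g + ε / c) (lt_add_of_pos_right _ (by positivity))
    have h3 : c * (g + ε / c) = c * g + ε := by field_simp
    linarith

noncomputable def nuA (T : Set A) (x : A) : ℝ := sInf {r : ℝ | 0 < r ∧ x ∈ r • T}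

lemma mem_smul_mono {T : Set A} (hbal : Balanced ℝ T) {x : A} {r s : ℝ}
    (hr : 0 < r) (hrs : r ≤ s) (h : x ∈ r • T) : x ∈ s • T := by
  obtain ⟨t, ht, rfl⟩ := h
  have hs : 0 < s := hr.trans_le hrs
  refine ⟨(r / s) • t, hbal (r / s) ?_ (smul_mem_smul_set ht), ?_⟩
  · rw [Real.norm_eq_abs, abs_of_pos (div_pos hr hs)]
    exact div_le_one_of_le₀ hrs hs.le
  · show s • ((r / s) • t) = r • t
    rw [smul_smul, mul_div_cancel₀ _ hs.ne']

lemma mem_smul_add {T : Set A} (hconv : Convex ℝ T) {x y : A} {a b : ℝ}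
    (ha : 0 < a) (hb : 0 < b) (hx : x ∈ a • T) (hy : y ∈ b • T) :
    x + y ∈ (a + b) • T := by
  obtain ⟨t, ht, rfl⟩ := hx
  obtain ⟨u, hu, rfl⟩ := hy
  have hab : 0 < a + b := by linarith
  refine ⟨(a / (a + b)) • t + (b / (a + b)) • u,
    hconv ht hu (by positivity) (by positivity) (by field_simp), ?_⟩
  show (a + b) • ((a / (a + b)) • t + (b / (a + b)) • u) = a • t + b • u
  rw [smul_add, smul_smul, smul_smul, mul_div_cancel₀ _ hab.ne', mul_div_cancel₀ _ hab.ne']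

lemma mem_smul_smul {T : Set A} (hbal : Balanced ℝ T) {x : A} {c r : ℝ}
    (hc : c ≠ 0) (hr : 0 < r) (hx : x ∈ r • T) : c • x ∈ (|c| * r) • T := by
  obtain ⟨t, ht, rfl⟩ := hx
  refine ⟨(c / |c|) • t, hbal (c / |c|) ?_ (smul_mem_smul_set ht), ?_⟩
  · rw [Real.norm_eq_abs, abs_div, abs_abs, div_self (abs_ne_zero.2 hc)]
  · show (|c| * r) • ((c / |c|) • t) = (c • r • t : A)
    rw [smul_smul, smul_smul]
    congr 1
    have hc0 : |c| ≠ 0 := abs_ne_zero.2 hc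
    field_simp

lemma mem_smul_mul {T : Set A} (hT : T * T ⊆ T) {x y : A} {a b : ℝ}
    (hx : x ∈ a • T) (hy : y ∈ b • T) : x * y ∈ (a * b) • T := by
  obtain ⟨t, ht, rfl⟩ := hx
  obtain ⟨u, hu, rfl⟩ := hy
  refine ⟨t * u, hT (Set.mul_mem_mul ht hu), ?_⟩
  rw [smul_mul_assoc, mul_smul_comm, smul_smul]

lemma nuA_nonneg (T : Set A) (x : A) : 0 ≤ nuA T x :=
  Real.sInf_nonneg fun r hr => hr.1.le

lemma nuA_le {T : Set A} {x : A} {r : ℝ} (hr : 0 < r) (h : x ∈ r • T) : nuA T x ≤ r :=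
  csInf_le ⟨0, fun s hs => hs.1.le⟩ ⟨hr, h⟩

lemma mem_of_nuA_lt {T : Set A} (hbal : Balanced ℝ T) {x : A}
    (hne : ∃ r : ℝ, 0 < r ∧ x ∈ r • T) {s : ℝ} (hs : nuA T x < s) : x ∈ s • T := by
  obtain ⟨r, ⟨hr, hxr⟩, hrs⟩ := exists_lt_of_csInf_lt ⟨hne.choose, hne.choose_spec⟩ hs
  exact mem_smul_mono hbal hr hrs.le hxr

end Aux

section Main

variable {A : Type} [NonUnitalRing A] [Module ℝ A]
  [IsScalarTower ℝ A A] [SMulCommClass ℝ A A]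

lemma exists_smul_mem_of_mem_adjoin {T : Set A} (hbal : Balanced ℝ T) (hconv : Convex ℝ T)
    (hmulT : T * T ⊆ T) (h0T : (0 : A) ∈ T) {x : A}
    (hx : x ∈ NonUnitalAlgebra.adjoin ℝ T) :
    ∃ r : ℝ, 0 < r ∧ x ∈ r • T := by
  induction hx using NonUnitalAlgebra.adjoin_induction with
  | mem t ht => exact ⟨1, one_pos, by rw [one_smul]; exact ht⟩
  | zero => exact ⟨1, one_pos, ⟨0, h0T, smul_zero 1⟩⟩
  | add x y hx hy ihx ihy =>
      obtain ⟨a, ha, hxa⟩ := ihx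
      obtain ⟨b, hb, hyb⟩ := ihy
      exact ⟨a + b, by linarith, mem_smul_add hconv ha hb hxa hyb⟩
  | mul x y hx hy ihx ihy =>
      obtain ⟨a, ha, hxa⟩ := ihx
      obtain ⟨b, hb, hyb⟩ := ihy
      exact ⟨a * b, mul_pos ha hb, mem_smul_mul hmulT hxa hyb⟩
  | smul r x hx ihx =>
      obtain ⟨a, ha, hxa⟩ := ihx
      rcases eq_or_ne r 0 with rfl | hr
      · exact ⟨1, one_pos, by rw [zero_smul]; exact ⟨0, h0T, smul_zero 1⟩⟩
      · exact ⟨|r| * a, mul_pos (abs_pos.2 hr) ha, mem_smul_smul hbal hr ha hxa⟩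

lemma nuA_zero {T : Set A} (h0T : (0 : A) ∈ T) : nuA T (0 : A) = 0 := by
  refine le_antisymm (aux_le_of_pos fun ε hε => ?_) (nuA_nonneg _ _)
  have := nuA_le hε ⟨0, h0T, smul_zero ε⟩
  linarith

theorem stmt4 {A : Type} [NonUnitalRing A] [Module ℝ A]
    [IsScalarTower ℝ A A] [SMulCommClass ℝ A A] [Bornology A]
    (hsep : SeparatedBorn A)
    (hmul : ∀ S T : Set A, IsBounded S → IsBounded T → IsBounded (S * T))
    (hsm : ∀ (r : ℝ) (S : Set A), IsBounded S → IsBounded (r • S))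
    (hhull : ∀ S : Set A, IsBounded S → IsBounded (convexHull ℝ (balancedHull ℝ S))) :
    LocallyMultiplicative A ↔ IsDirectLimitOfNormedAlgebras A := by
  constructor
  · intro h
    -- normalize: we can always take T containing 0
    have key : ∀ S : Set A, IsBounded S → ∃ l : ℝ, ∃ T : Set A, 0 < l ∧ IsBounded T ∧
        Balanced ℝ T ∧ Convex ℝ T ∧ T * T ⊆ T ∧ (0 : A) ∈ T ∧ S ⊆ l • T := by
      intro S hS
      obtain ⟨l, T, hl, hTb, ⟨hbal, hconv⟩, hmulT, hsub⟩ :=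
        h (S ∪ {0}) (hS.union isBounded_singleton)
      have h0T : (0 : A) ∈ T := by
        obtain ⟨t, ht, hlt⟩ := hsub (Or.inr rfl)
        have hlt' : l • t = 0 := hlt
        have ht0 : t = 0 := by
          have h2 : l⁻¹ • (l • t) = l⁻¹ • (0 : A) := by rw [hlt']
          rwa [smul_smul, inv_mul_cancel₀ hl.ne', one_smul, smul_zero] at h2
        rwa [ht0] at ht
      exact ⟨l, T, hl, hTb, hbal, hconv, hmulT, h0T, fun x hx => hsub (Or.inl hx)⟩
    set ι := {T : Set A // IsBounded T ∧ Balanced ℝ T ∧ Convex ℝ T ∧ T * T ⊆ T ∧ (0 : A) ∈ T}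
      with hι
    have i0 : ι := ⟨{0}, isBounded_singleton,
      fun a _ x hx => by
        obtain ⟨y, hy, rfl⟩ := hx
        simp only [Set.mem_singleton_iff] at hy
        simp [hy],
      convex_singleton 0,
      by rintro z ⟨x, hx, y, hy, rfl⟩
         simp only [Set.mem_singleton_iff] at hx hy
         simp [hx, hy],
      rfl⟩
    have habs : ∀ (T : ι) (x : A), x ∈ NonUnitalAlgebra.adjoin ℝ T.1 →
        ∃ r : ℝ, 0 < r ∧ x ∈ r • T.1 :=
      fun T x hx => exists_smul_mem_of_mem_adjoin T.2.2.1 T.2.2.2.1 T.2.2.2.2.1 T.2.2.2.2.2 hx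
    refine ⟨ι, fun T T' => ∃ l : ℝ, 0 < l ∧ T.1 ⊆ l • T'.1, ⟨i0⟩,
      fun T => ⟨1, one_pos, by rw [one_smul]⟩,
      fun T T' T'' ⟨l, hl, hsub⟩ ⟨m, hm, hsub'⟩ => ⟨l * m, mul_pos hl hm, fun x hx => ?_⟩,
      fun T T' => ?_,
      fun T => NonUnitalAlgebra.adjoin ℝ T.1, fun T => nuA T.1,
      ?_, ?_, ?_, ?_, ?_, ?_, ?_, ?_, ?_⟩
    · -- transitivity
      obtain ⟨t, ht, rfl⟩ := hsub hx
      obtain ⟨u, hu, rfl⟩ := hsub' ht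
      exact ⟨u, hu, (smul_smul l m u).symm⟩
    · -- directedness
      obtain ⟨l, U, hl, hUb, hUbal, hUconv, hUmul, hU0, hUsub⟩ :=
        key (T.1 ∪ T'.1) (T.2.1.union T'.2.1)
      exact ⟨⟨U, hUb, hUbal, hUconv, hUmul, hU0⟩,
        ⟨l, hl, fun x hx => hUsub (Or.inl hx)⟩,
        ⟨l, hl, fun x hx => hUsub (Or.inr hx)⟩⟩
    · -- monotone
      rintro T T' ⟨l, hl, hsub⟩
      refine NonUnitalAlgebra.adjoin_le fun t ht => ?_
      obtain ⟨u, hu, rfl⟩ := hsub ht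
      exact SMulMemClass.smul_mem l (NonUnitalAlgebra.subset_adjoin ℝ hu)
    · -- covering
      intro x
      obtain ⟨l, U, hl, hUb, hUbal, hUconv, hUmul, hU0, hUsub⟩ :=
        key {x} isBounded_singleton
      obtain ⟨u, hu, rfl⟩ := hUsub rfl
      exact ⟨⟨U, hUb, hUbal, hUconv, hUmul, hU0⟩,
        SMulMemClass.smul_mem l (NonUnitalAlgebra.subset_adjoin ℝ hu)⟩
    · -- nonneg
      exact fun T x _ => nuA_nonneg _ _
    · -- norm zero iff zero
      intro T x hx
      replace hx : x ∈ NonUnitalAlgebra.adjoin ℝ T.1 := hx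
      show nuA T.1 x = 0 ↔ x = 0
      constructor
      · intro h0
        have hW : (Submodule.span ℝ {x} : Set A) ⊆ T.1 := by
          intro y hy
          rw [SetLike.mem_coe, Submodule.mem_span_singleton] at hy
          obtain ⟨r, rfl⟩ := hy
          rcases eq_or_ne r 0 with rfl | hr
          · rw [zero_smul]; exact T.2.2.2.2.2
          · have hx1 : x ∈ |r|⁻¹ • T.1 :=
              mem_of_nuA_lt T.2.2.1 (habs T x hx)
                (by rw [h0]; exact inv_pos.2 (abs_pos.2 hr))
            have h2 := mem_smul_smul T.2.2.1 hr (inv_pos.2 (abs_pos.2 hr)) hx1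
            rw [mul_inv_cancel₀ (abs_ne_zero.2 hr), one_smul] at h2
            exact h2
        have hbot := hsep _ (T.2.1.subset hW)
        have hxW : x ∈ Submodule.span ℝ ({x} : Set A) := Submodule.mem_span_singleton_self x
        rw [hbot] at hxW
        simpa using hxW
      · rintro rfl
        exact nuA_zero T.2.2.2.2.2
    · -- triangle inequality
      intro T x hx y hy
      replace hx : x ∈ NonUnitalAlgebra.adjoin ℝ T.1 := hx
      replace hy : y ∈ NonUnitalAlgebra.adjoin ℝ T.1 := hy
      show nuA T.1 (x + y) ≤ nuA T.1 x + nuA T.1 y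
      apply aux_le_of_pos
      intro ε hε
      have hx2 : x ∈ (nuA T.1 x + ε / 2) • T.1 :=
        mem_of_nuA_lt T.2.2.1 (habs T x hx) (by linarith)
      have hy2 : y ∈ (nuA T.1 y + ε / 2) • T.1 :=
        mem_of_nuA_lt T.2.2.1 (habs T y hy) (by linarith)
      have hxnn := nuA_nonneg T.1 x
      have hynn := nuA_nonneg T.1 y
      have hsum := mem_smul_add T.2.2.2.1 (by linarith) (by linarith) hx2 hy2
      have := nuA_le (by linarith : (0:ℝ) < nuA T.1 x + ε / 2 + (nuA T.1 y + ε / 2)) hsum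
      linarith
    · -- homogeneity
      intro T r x hx
      replace hx : x ∈ NonUnitalAlgebra.adjoin ℝ T.1 := hx
      show nuA T.1 (r • x) = |r| * nuA T.1 x
      rcases eq_or_ne r 0 with rfl | hr
      · rw [zero_smul, nuA_zero T.2.2.2.2.2, abs_zero, zero_mul]
      · have hxnn := nuA_nonneg T.1 x
        have h1 : nuA T.1 (r • x) ≤ |r| * nuA T.1 x := by
          apply aux_le_mul (abs_nonneg r)
          intro s hs
          have hs0 : 0 < s := lt_of_le_of_lt hxnn hs
          exact nuA_le (mul_pos (abs_pos.2 hr) hs0)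
            (mem_smul_smul T.2.2.1 hr hs0 (mem_of_nuA_lt T.2.2.1 (habs T x hx) hs))
        have hrx : r • x ∈ NonUnitalAlgebra.adjoin ℝ T.1 := SMulMemClass.smul_mem r hx
        have hrxnn := nuA_nonneg T.1 (r • x)
        have h2 : nuA T.1 x ≤ |r⁻¹| * nuA T.1 (r • x) := by
          have h3 : nuA T.1 (r⁻¹ • (r • x)) ≤ |r⁻¹| * nuA T.1 (r • x) := by
            apply aux_le_mul (abs_nonneg r⁻¹)
            intro s hs
            have hs0 : 0 < s := lt_of_le_of_lt hrxnn hs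
            exact nuA_le (mul_pos (abs_pos.2 (inv_ne_zero hr)) hs0)
              (mem_smul_smul T.2.2.1 (inv_ne_zero hr) hs0
                (mem_of_nuA_lt T.2.2.1 (habs T _ hrx) hs))
          rwa [inv_smul_smul₀ hr] at h3
        have habs1 : |r| * |r⁻¹| = 1 := by
          rw [abs_inv, mul_inv_cancel₀ (abs_ne_zero.2 hr)]
        refine le_antisymm h1 ?_
        calc |r| * nuA T.1 x ≤ |r| * (|r⁻¹| * nuA T.1 (r • x)) := by
              exact mul_le_mul_of_nonneg_left h2 (abs_nonneg r)
          _ = nuA T.1 (r • x) := by rw [← mul_assoc, habs1, one_mul]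
    · -- submultiplicativity
      intro T x hx y hy
      replace hx : x ∈ NonUnitalAlgebra.adjoin ℝ T.1 := hx
      replace hy : y ∈ NonUnitalAlgebra.adjoin ℝ T.1 := hy
      show nuA T.1 (x * y) ≤ nuA T.1 x * nuA T.1 y
      have hxnn := nuA_nonneg T.1 x
      have hynn := nuA_nonneg T.1 y
      have h1 : ∀ a, nuA T.1 x < a → nuA T.1 (x * y) ≤ nuA T.1 y * a := by
        intro a ha
        have ha0 : 0 < a := lt_of_le_of_lt hxnn ha
        have h2 : ∀ b, nuA T.1 y < b → nuA T.1 (x * y) ≤ a * b := by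
          intro b hb
          have hb0 : 0 < b := lt_of_le_of_lt hynn hb
          exact nuA_le (mul_pos ha0 hb0)
            (mem_smul_mul T.2.2.2.2.1 (mem_of_nuA_lt T.2.2.1 (habs T x hx) ha)
              (mem_of_nuA_lt T.2.2.1 (habs T y hy) hb))
        have := aux_le_mul ha0.le h2
        linarith [this]
      have := aux_le_mul hynn h1
      linarith [this]
    · -- structure maps bounded
      rintro T T' ⟨l, hl, hsub⟩
      refine ⟨l, hl, fun x hx => ?_⟩
      replace hx : x ∈ NonUnitalAlgebra.adjoin ℝ T.1 := hx
      show nuA T'.1 x ≤ l * nuA T.1 x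
      apply aux_le_mul hl.le
      intro s hs
      have hs0 : 0 < s := lt_of_le_of_lt (nuA_nonneg _ _) hs
      have hx2 : x ∈ s • T.1 := mem_of_nuA_lt T.2.2.1 (habs T x hx) hs
      obtain ⟨t, ht, rfl⟩ := hx2
      obtain ⟨u, hu, rfl⟩ := hsub ht
      have : s • l • u ∈ (l * s) • T'.1 := ⟨u, hu, by rw [smul_smul, mul_comm]⟩
      exact nuA_le (mul_pos hl hs0) this
    · -- bornology
      intro U
      constructor
      · intro hU
        obtain ⟨l, T, hl, hTb, hTbal, hTconv, hTmul, hT0, hTsub⟩ := key U hU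
        refine ⟨⟨T, hTb, hTbal, hTconv, hTmul, hT0⟩, l, fun x hx => ?_⟩
        show x ∈ NonUnitalAlgebra.adjoin ℝ T ∧ nuA T x ≤ l
        refine ⟨?_, nuA_le hl (hTsub hx)⟩
        obtain ⟨u, hu, rfl⟩ := hTsub hx
        exact SMulMemClass.smul_mem l (NonUnitalAlgebra.subset_adjoin ℝ hu)
      · rintro ⟨T, C, hsub⟩
        refine (hsm (|C| + 1) T.1 T.2.1).subset ?_
        intro x hx
        obtain ⟨hx1, hx2⟩ := hsub hx
        exact mem_of_nuA_lt T.2.2.1 (habs T x hx1)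
          (lt_of_le_of_lt hx2 (lt_of_le_of_lt (le_abs_self C) (lt_add_one _)))
  · -- reverse direction
    rintro ⟨ι, le, hne, hrefl, htrans, hdir, Sa, ν, hmono, hcover, hnn, hzero, hadd,
      hsmul, hsubmul, hstruct, hborn⟩
    intro S hS
    obtain ⟨i, C, hsub⟩ := (hborn S).1 hS
    set l : ℝ := max C 1 with hl
    have hl0 : 0 < l := lt_of_lt_of_le one_pos (le_max_right _ _)
    refine ⟨l, {x | x ∈ Sa i ∧ ν i x ≤ 1}, hl0, (hborn _).2 ⟨i, 1, subset_rfl⟩,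
      ⟨?_, ?_⟩, ?_, ?_⟩
    · -- balanced
      intro a ha z hz
      obtain ⟨y, ⟨hy1, hy2⟩, rfl⟩ := hz
      refine ⟨SMulMemClass.smul_mem a hy1, ?_⟩
      rw [hsmul i a y hy1]
      rw [Real.norm_eq_abs] at ha
      calc |a| * ν i y ≤ 1 * 1 :=
        mul_le_mul ha hy2 (hnn i y hy1) zero_le_one
        _ = 1 := one_mul 1
    · -- convex
      rintro x ⟨hx1, hx2⟩ y ⟨hy1, hy2⟩ a b ha hb hab
      have hax : a • x ∈ Sa i := SMulMemClass.smul_mem a hx1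
      have hby : b • y ∈ Sa i := SMulMemClass.smul_mem b hy1
      refine ⟨add_mem hax hby, ?_⟩
      calc ν i (a • x + b • y) ≤ ν i (a • x) + ν i (b • y) := hadd i _ hax _ hby
        _ = |a| * ν i x + |b| * ν i y := by rw [hsmul i a x hx1, hsmul i b y hy1]
        _ = a * ν i x + b * ν i y := by rw [abs_of_nonneg ha, abs_of_nonneg hb]
        _ ≤ a * 1 + b * 1 := by
            have := hnn i x hx1
            have := hnn i y hy1
            gcongr
        _ = 1 := by rw [mul_one, mul_one, hab]
    · -- multiplicatively closed
      rintro z ⟨x, ⟨hx1, hx2⟩, y, ⟨hy1, hy2⟩, rfl⟩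
      refine ⟨mul_mem hx1 hy1, ?_⟩
      calc ν i (x * y) ≤ ν i x * ν i y := hsubmul i x hx1 y hy1
        _ ≤ 1 * 1 := mul_le_mul hx2 hy2 (hnn i y hy1) zero_le_one
        _ = 1 := one_mul 1
    · -- absorption
      intro x hx
      obtain ⟨hx1, hx2⟩ := hsub hx
      refine ⟨l⁻¹ • x, ⟨SMulMemClass.smul_mem l⁻¹ hx1, ?_⟩, smul_inv_smul₀ hl0.ne' x⟩
      rw [hsmul i l⁻¹ x hx1, abs_of_pos (inv_pos.2 hl0)]
      have hxl : ν i x ≤ l := le_trans hx2 (le_max_left _ _)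
      calc l⁻¹ * ν i x ≤ l⁻¹ * l := by gcongr
        _ = 1 := inv_mul_cancel₀ hl0.ne'


end Main
end

section
/- If P and Q are paracomplexes over a para-additive category, then the space Hom(P,Q) of degree-homogeneous morphism families equipped with the differential δ(φ) = ∂_Q ∘ φ − (−1)^{|φ|} φ ∘ ∂_P is an ordinary chain complex, i.e., δ² = 0. -/
/-!
STATEMENT 7: For paracomplexes `P`, `Q` over a para-additive category, the graded space
`Hom(P,Q)` with differential `δ(φ) = ∂_Q ∘ φ − (−1)^{|φ|} φ ∘ ∂_P` is an ordinary chain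
complex: `δ² = 0`.  We state `δ² = 0` componentwise, on even and on odd elements.
-/

open CategoryTheory

variable {C : Type*} [Category C] [Preadditive C]

/-- The component of a natural transformation of the identity functor at an object. -/
def TApp (T : 𝟭 C ≅ 𝟭 C) (X : C) : X ⟶ X := T.hom.app X

/-- A paracomplex over a para-additive category `(C, T)`. -/
structure Paracomplex (C : Type*) [Category C] [Preadditive C] (T : 𝟭 C ≅ 𝟭 C) where
  X0 : C
  X1 : C
  d0 : X0 ⟶ X1
  d1 : X1 ⟶ X0
  sq0 : d0 ≫ d1 = 𝟙 X0 - TApp T X0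
  sq1 : d1 ≫ d0 = 𝟙 X1 - TApp T X1

/- `δ` on an even element `(f0, f1)` of `Hom(P,Q)` has components
`f0 ≫ Q.d0 - P.d0 ≫ f1 : P.X0 ⟶ Q.X1` and `f1 ≫ Q.d1 - P.d1 ≫ f0 : P.X1 ⟶ Q.X0`;
on an odd element `(g0 : P.X0 ⟶ Q.X1, g1 : P.X1 ⟶ Q.X0)` it has components
`g0 ≫ Q.d1 + P.d0 ≫ g1 : P.X0 ⟶ Q.X0` and `g1 ≫ Q.d0 + P.d1 ≫ g0 : P.X1 ⟶ Q.X1`. -/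
theorem stmt7 (T : 𝟭 C ≅ 𝟭 C) (P Q : Paracomplex C T) :
    -- δ² = 0 on even elements of Hom(P,Q):
    (∀ (f0 : P.X0 ⟶ Q.X0) (f1 : P.X1 ⟶ Q.X1),
      (f0 ≫ Q.d0 - P.d0 ≫ f1) ≫ Q.d1 + P.d0 ≫ (f1 ≫ Q.d1 - P.d1 ≫ f0) = 0 ∧
      (f1 ≫ Q.d1 - P.d1 ≫ f0) ≫ Q.d0 + P.d1 ≫ (f0 ≫ Q.d0 - P.d0 ≫ f1) = 0) ∧
    -- δ² = 0 on odd elements of Hom(P,Q):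
    (∀ (g0 : P.X0 ⟶ Q.X1) (g1 : P.X1 ⟶ Q.X0),
      (g0 ≫ Q.d1 + P.d0 ≫ g1) ≫ Q.d0 - P.d0 ≫ (g1 ≫ Q.d0 + P.d1 ≫ g0) = 0 ∧
      (g1 ≫ Q.d0 + P.d1 ≫ g0) ≫ Q.d1 - P.d1 ≫ (g0 ≫ Q.d1 + P.d0 ≫ g1) = 0) := by
  have nat : ∀ {X Y : C} (f : X ⟶ Y), f ≫ TApp T Y = TApp T X ≫ f := by
    intro X Y f
    simpa [TApp] using T.hom.naturality f
  refine ⟨fun f0 f1 => ⟨?_, ?_⟩, fun g0 g1 => ⟨?_, ?_⟩⟩ <;>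
    simp only [Preadditive.sub_comp, Preadditive.add_comp, Preadditive.comp_sub,
      Preadditive.comp_add, Category.assoc, Q.sq0, Q.sq1,
      reassoc_of% P.sq0, reassoc_of% P.sq1,
      Category.comp_id, Category.id_comp, nat] <;>
    abel
end

section
/- Let H be an idempotented algebra and C the category of separated essential H-modules. The direct limit functor is left adjoint to the dissection functor dis: for every inductive system (M_j)_{j∈J} of primitive H-modules and every essential H-module N, there is a natural isomorphism Hom_C(colim (M_j), N) ≅ Hom_{ind}((M_j), dis(N)). Moreover colim ∘ dis is naturally equivalent to the identity and dis is fully faithful. -/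
/-!
STATEMENT 8: Let `H` be an idempotented algebra and `C` the category of separated
essential bornological `H`-modules.  The direct limit functor is left adjoint to the
dissection functor `dis`: for every inductive system `(M_j)` of primitive modules and
every essential module `N` there is a natural bijection
`Hom_C(colim M_j, N) ≅ Hom_ind((M_j), dis(N))`.
Moreover `colim ∘ dis` is naturally equivalent to the identity and `dis` is fully
faithful; concretely, since `dis(N)` is the injective inductive system of the submodules
`H⟨S⟩` generated by small disks `S ⊆ N`, morphisms of inductive systems into `dis(N)`
are compatible families of maps which factor boundedly through some `H⟨S⟩`, and
morphisms `dis(N) → dis(N')` correspond exactly to bounded `H`-module maps `N → N'`.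
-/

open Bornology Set
open scoped Pointwise

/-- The disked hull. -/
def dhull {V : Type} [AddCommGroup V] [Module ℝ V] (S : Set V) : Set V :=
  convexHull ℝ (balancedHull ℝ S)

variable (H : Type) [NonUnitalRing H]

/-- An idempotented algebra (with the fine bornology): every finite subset admits a
local unit given by an idempotent. -/
def Idempotented : Prop :=
  ∀ F : Finset H, ∃ e : H, e * e = e ∧ ∀ x ∈ F, e * x = x ∧ x * e = x

/-- A bornological module over `H`: a convex bornological `ℝ`-vector space with a
compatible `H`-module structure; `small` is the bornology. -/
structure BMod : Type 1 where
  M : Type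
  [grp : AddCommGroup M]
  [mod : Module ℝ M]
  hsmul : H → M → M
  hsmul_add : ∀ h m n, hsmul h (m + n) = hsmul h m + hsmul h n
  hsmul_addl : ∀ h g m, hsmul (h + g) m = hsmul h m + hsmul g m
  hsmul_mul : ∀ h g m, hsmul (h * g) m = hsmul h (hsmul g m)
  hsmul_real : ∀ (r : ℝ) h m, hsmul h (r • m) = r • hsmul h m
  small : Set M → Prop
  small_mono : ∀ S T : Set M, T ⊆ S → small S → small T
  small_union : ∀ S T : Set M, small S → small T → small (S ∪ T)
  small_sing : ∀ m, small {m}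
  small_smul : ∀ (r : ℝ) (S : Set M), small S → small (r • S)
  small_hull : ∀ S : Set M, small S → small (dhull S)
  small_hsmul : ∀ (h : H) (S : Set M), small S → small (hsmul h '' S)

attribute [instance] BMod.grp BMod.mod

variable {H}

/-- A morphism of bornological `H`-modules: a bounded `ℝ`-linear `H`-linear map. -/
structure BHom (X Y : BMod H) where
  f : X.M →ₗ[ℝ] Y.M
  map_h : ∀ h m, f (X.hsmul h m) = Y.hsmul h (f m)
  bdd : ∀ S : Set X.M, X.small S → Y.small (⇑f '' S)

/-- Separatedness. -/
def SeparatedM (X : BMod H) : Prop :=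
  ∀ W : Submodule ℝ X.M, X.small (W : Set X.M) → W = ⊥

/-- Essentiality: over an idempotented algebra, every small set admits an idempotent
local unit (`H ⊗_H X ≅ X`). -/
def EssentialM (X : BMod H) : Prop :=
  ∀ S : Set X.M, X.small S → ∃ e : H, e * e = e ∧ ∀ m ∈ S, X.hsmul e m = m

/-- The submodule `H⟨S⟩` generated by `S` (the image of `H ⊗ ⟨S⟩`). -/
def genSub (X : BMod H) (S : Set X.M) : Submodule ℝ X.M :=
  Submodule.span ℝ {m | ∃ h : H, ∃ x ∈ S, m = X.hsmul h x}

/-- `U` is small for the quotient bornology of `H⟨S⟩` (with `H` carrying the fine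
bornology and `⟨S⟩` the normed space of the disk `S`). -/
def SubSmall (X : BMod H) (S : Set X.M) (U : Set X.M) : Prop :=
  ∃ (F : Finset H) (c : ℝ), 0 < c ∧
    U ⊆ dhull {m | ∃ h ∈ F, ∃ x ∈ S, m = c • X.hsmul h x}

/-- A primitive module: one generated, as a bornological `H`-module, by a single small
disk, i.e. some canonical map `H⟨S⟩ → X` is a bornological isomorphism. -/
def PrimitiveM (X : BMod H) : Prop :=
  ∃ S : Set X.M, X.small S ∧ Balanced ℝ S ∧ Convex ℝ S ∧ genSub X S = ⊤ ∧
    ∀ U : Set X.M, X.small U → SubSmall X S U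


section Helpers

variable {V W : Type} [AddCommGroup V] [Module ℝ V] [AddCommGroup W] [Module ℝ W]

lemma subset_dhull (S : Set V) : S ⊆ dhull S :=
  (subset_balancedHull ℝ).trans (subset_convexHull ℝ _)

lemma dhull_balanced (S : Set V) : Balanced ℝ (dhull S) :=
  (balancedHull.balanced S).convexHull

lemma dhull_convex (S : Set V) : Convex ℝ (dhull S) := convex_convexHull ℝ _

lemma dhull_mono {S T : Set V} (h : S ⊆ T) : dhull S ⊆ dhull T :=
  convexHull_mono (balancedHull_mono h)

lemma image_balancedHull (g : V →ₗ[ℝ] W) (S : Set V) :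
    ⇑g '' balancedHull ℝ S ⊆ balancedHull ℝ (⇑g '' S) := by
  rintro _ ⟨x, hx, rfl⟩
  obtain ⟨r, hr, y, hy, rfl⟩ := mem_balancedHull_iff.1 hx
  exact mem_balancedHull_iff.2 ⟨r, hr, g y, ⟨y, hy, rfl⟩, (g.map_smul r y).symm⟩

lemma image_dhull (g : V →ₗ[ℝ] W) (S : Set V) : ⇑g '' dhull S ⊆ dhull (⇑g '' S) := by
  rw [dhull, g.image_convexHull]
  exact convexHull_mono (image_balancedHull g S)

variable {H : Type} [NonUnitalRing H]

lemma BHom.ext' {X Y : BMod H} {F G : BHom X Y} (h : F.f = G.f) : F = G := by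
  cases F; cases G; cases h; rfl

/-- Composition of bornological module maps. -/
def BHom.comp {X Y Z : BMod H} (G : BHom Y Z) (F : BHom X Y) : BHom X Z where
  f := G.f.comp F.f
  map_h h m := by
    show G.f (F.f (X.hsmul h m)) = Z.hsmul h (G.f (F.f m))
    rw [F.map_h, G.map_h]
  bdd S hS := by
    rw [LinearMap.coe_comp, Set.image_comp]
    exact G.bdd _ (F.bdd S hS)

lemma bmodSmallBiUnion (X : BMod H) (F : Finset H) (S : Set X.M) (hS : X.small S) :
    X.small (⋃ h ∈ F, X.hsmul h '' S) := by
  classical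
  induction F using Finset.induction_on with
  | empty =>
      refine X.small_mono {0} _ ?_ (X.small_sing 0)
      simp
  | insert hx ih =>
      rename_i a F'
      rw [Finset.set_biUnion_insert]
      exact X.small_union _ _ (X.small_hsmul hx S hS) F'

lemma subSmall_small (X : BMod H) {S U : Set X.M} (hS : X.small S)
    (h : SubSmall X S U) : X.small U := by
  obtain ⟨F, c, hc, hsub⟩ := h
  refine X.small_mono _ _ hsub (X.small_hull _ ?_)
  refine X.small_mono (c • ⋃ h ∈ F, X.hsmul h '' S) _ ?_
      (X.small_smul c _ (bmodSmallBiUnion X F S hS))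
  rintro _ ⟨h, hhF, x, hx, rfl⟩
  exact ⟨X.hsmul h x, Set.mem_biUnion hhF ⟨x, hx, rfl⟩, rfl⟩

lemma map_genSub {X Y : BMod H} (g : X.M →ₗ[ℝ] Y.M)
    (hg : ∀ h m, g (X.hsmul h m) = Y.hsmul h (g m))
    {S : Set X.M} {S' : Set Y.M} (hS' : ⇑g '' S ⊆ S')
    {m : X.M} (hm : m ∈ genSub X S) : g m ∈ genSub Y S' := by
  have hle : Submodule.map g (genSub X S) ≤ genSub Y S' := by
    rw [genSub, Submodule.map_span, Submodule.span_le]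
    rintro _ ⟨_, ⟨h, x, hx, rfl⟩, rfl⟩
    exact Submodule.subset_span ⟨h, g x, hS' ⟨x, hx, rfl⟩, hg h x⟩
  exact hle ⟨m, hm, rfl⟩

lemma map_subSmall {X Y : BMod H} (g : X.M →ₗ[ℝ] Y.M)
    (hg : ∀ h m, g (X.hsmul h m) = Y.hsmul h (g m))
    {S : Set X.M} {S' : Set Y.M} (hS' : ⇑g '' S ⊆ S')
    {U : Set X.M} (hU : SubSmall X S U) : SubSmall Y S' (⇑g '' U) := by
  obtain ⟨F, c, hc, hsub⟩ := hU
  refine ⟨F, c, hc, (Set.image_mono hsub).trans ((image_dhull g _).trans (dhull_mono ?_))⟩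
  rintro _ ⟨_, ⟨h, hhF, x, hx, rfl⟩, rfl⟩
  exact ⟨h, hhF, g x, hS' ⟨x, hx, rfl⟩, by rw [g.map_smul, hg]⟩

lemma subSmall_self (X : BMod H) (hX : EssentialM X) {S : Set X.M} (hS : X.small S) :
    SubSmall X (dhull S) S := by
  obtain ⟨e, _, hfix⟩ := hX (dhull S) (X.small_hull S hS)
  refine ⟨{e}, 1, one_pos, fun s hs => subset_dhull _ ?_⟩
  exact ⟨e, Finset.mem_singleton_self e, s, subset_dhull S hs,
    by rw [one_smul, hfix s (subset_dhull S hs)]⟩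

end Helpers

theorem stmt8 {H : Type} [NonUnitalRing H]
    (hH : Idempotented H)
    -- an inductive system of primitive (separated, essential) modules over a
    -- directed index set J
    (J : Type) [Preorder J] [IsDirected J (· ≤ ·)]
    (M : J → BMod H)
    (ψ : ∀ {j k : J}, j ≤ k → BHom (M j) (M k))
    (hψ_id : ∀ (j : J) (m : (M j).M), (ψ (le_refl j)).f m = m)
    (hψ_comp : ∀ {i j k : J} (hij : i ≤ j) (hjk : j ≤ k) (m : (M i).M),
      (ψ hjk).f ((ψ hij).f m) = (ψ (hij.trans hjk)).f m)
    (hMprim : ∀ j, PrimitiveM (M j))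
    (hMsep : ∀ j, SeparatedM (M j)) (hMess : ∀ j, EssentialM (M j))
    -- `Mc` is the separated inductive limit of the system
    (Mc : BMod H) (hMcsep : SeparatedM Mc) (hMcess : EssentialM Mc)
    (u : ∀ j, BHom (M j) Mc)
    (hu : ∀ {j k : J} (h : j ≤ k) (m : (M j).M), (u k).f ((ψ h).f m) = (u j).f m)
    (huniv : ∀ (N : BMod H), SeparatedM N → EssentialM N →
      ∀ f : ∀ j, BHom (M j) N,
        (∀ {j k : J} (h : j ≤ k) (m : (M j).M), (f k).f ((ψ h).f m) = (f j).f m) →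
        ∃! F : BHom Mc N, ∀ j m, F.f ((u j).f m) = (f j).f m) :
    -- (i)  Hom_C(colim M, N) ≅ Hom_ind((M_j), dis N):  bounded module maps from the
    -- limit correspond to compatible families which factor boundedly through the
    -- submodules `H⟨S⟩` of the dissection of `N`;
    (∀ (N : BMod H), SeparatedM N → EssentialM N →
      ∃ e : BHom Mc N ≃
        {f : ∀ j, BHom (M j) N //
          (∀ {j k : J} (h : j ≤ k) (m : (M j).M), (f k).f ((ψ h).f m) = (f j).f m) ∧
          ∀ j, ∃ S : Set N.M, N.small S ∧ Balanced ℝ S ∧ Convex ℝ S ∧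
            (∀ m, (f j).f m ∈ genSub N S) ∧
            ∀ U : Set (M j).M, (M j).small U → SubSmall N S ((f j).f '' U)},
        ∀ (F : BHom Mc N) (j : J) (m : (M j).M),
          ((e F).1 j).f m = F.f ((u j).f m)) ∧
    -- (ii)  `colim ∘ dis ≅ id` and `dis` is fully faithful:  morphisms of inductive
    -- systems `dis N → dis N'` correspond exactly to bounded `H`-module maps `N → N'`.
    (∀ (N N' : BMod H), SeparatedM N → EssentialM N → SeparatedM N' → EssentialM N' →
      ∃ e' : BHom N N' ≃
        {g : N.M →ₗ[ℝ] N'.M //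
          (∀ h m, g (N.hsmul h m) = N'.hsmul h (g m)) ∧
          ∀ S : Set N.M, N.small S → Balanced ℝ S → Convex ℝ S →
            ∃ S' : Set N'.M, N'.small S' ∧ Balanced ℝ S' ∧ Convex ℝ S' ∧
              (∀ m ∈ genSub N S, g m ∈ genSub N' S') ∧
              ∀ U : Set N.M, SubSmall N S U → SubSmall N' S' (⇑g '' U)},
        ∀ (F : BHom N N') (m : N.M), ((e' F : _) : N.M →ₗ[ℝ] N'.M) m = F.f m) := by
    classical
  constructor
  · -- Part (i)
    intro N hNs hNe
    -- the forward map: restrict along the structure maps `u j`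
    have compat : ∀ F : BHom Mc N, ∀ {j k : J} (h : j ≤ k) (m : (M j).M),
        (F.comp (u k)).f ((ψ h).f m) = (F.comp (u j)).f m := by
      intro F j k h m
      show F.f ((u k).f ((ψ h).f m)) = F.f ((u j).f m)
      rw [hu h m]
    have cond2 : ∀ (f : ∀ j, BHom (M j) N) (j : J),
        ∃ S : Set N.M, N.small S ∧ Balanced ℝ S ∧ Convex ℝ S ∧
          (∀ m, (f j).f m ∈ genSub N S) ∧
          ∀ U : Set (M j).M, (M j).small U → SubSmall N S ((f j).f '' U) := by
      intro f j
      obtain ⟨S, hS, _, _, hgen, hbdd⟩ := hMprim j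
      refine ⟨dhull (⇑(f j).f '' S), N.small_hull _ ((f j).bdd S hS),
        dhull_balanced _, dhull_convex _, ?_, ?_⟩
      · intro m
        exact map_genSub (f j).f (f j).map_h (subset_dhull _)
          (by rw [hgen]; trivial)
      · intro U hU
        exact map_subSmall (f j).f (f j).map_h (subset_dhull _) (hbdd U hU)
    refine ⟨⟨fun F => ⟨fun j => F.comp (u j), compat F, cond2 _⟩,
        fun p => (huniv N hNs hNe p.1 p.2.1).exists.choose, ?_, ?_⟩, ?_⟩
    · intro F
      exact ((huniv N hNs hNe (fun j => F.comp (u j)) (compat F)).unique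
        (huniv N hNs hNe (fun j => F.comp (u j)) (compat F)).exists.choose_spec
        (fun j m => rfl))
    · intro p
      refine Subtype.ext (funext fun j => BHom.ext' (LinearMap.ext fun m => ?_))
      exact (huniv N hNs hNe p.1 p.2.1).exists.choose_spec j m
    · intro F j m
      rfl
  · -- Part (ii)
    intro N N' hNs hNe hN's hN'e
    refine ⟨⟨fun F => ⟨F.f, F.map_h, ?_⟩, fun p => ⟨p.1, p.2.1, ?_⟩,
        fun F => BHom.ext' rfl, fun p => Subtype.ext rfl⟩, fun F m => rfl⟩
    · intro S hS _ _
      refine ⟨dhull (⇑F.f '' S), N'.small_hull _ (F.bdd S hS),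
        dhull_balanced _, dhull_convex _, ?_, ?_⟩
      · intro m hm
        exact map_genSub F.f F.map_h (subset_dhull _) hm
      · intro U hU
        exact map_subSmall F.f F.map_h (subset_dhull _) hU
    · intro S hS
      obtain ⟨S', hS', _, _, _, hmap⟩ := p.2.2 (dhull S) (N.small_hull S hS)
        (dhull_balanced S) (dhull_convex S)
      exact subSmall_small N' hS' (hmap S (subSmall_self N hNe hS))
end
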